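/- The push-forward φ of the KNY translation on the Picard lattice is a Cremona-type isometry: φ is a ℤ-module automorphism of L, and ⟨φ(x), φ(y)⟩ = ⟨x, y⟩ for all x, y ∈ L. -/
import Mathlib


open scoped BigOperators


/-- The Picard lattice of the blown-up surface: free ℤ-module with basis
`H₀,H₁,E₁,…,E₈`, realized as coordinates `0,1,2,…,9` of `Fin 10 → ℤ`. -/
abbrev L : Type := Fin 10 → ℤ

def H0 : L := Pi.single 0 1
def H1 : L := Pi.single 1 1
def E1 : L := Pi.single 2 1
def E2 : L := Pi.single 3 1
def E3 : L := Pi.single 4 1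
def E4 : L := Pi.single 5 1
def E5 : L := Pi.single 6 1
def E6 : L := Pi.single 7 1
def E7 : L := Pi.single 8 1
def E8 : L := Pi.single 9 1

/-- The intersection form: `⟨H₀,H₁⟩ = 1`, `⟨H_i,H_i⟩ = 0`, `⟨E_k,E_l⟩ = -δ_{kl}`,
`⟨H_i,E_k⟩ = 0`. -/
def ip (x y : L) : ℤ :=
  x 0 * y 1 + x 1 * y 0 - x 2 * y 2 - x 3 * y 3 - x 4 * y 4 - x 5 * y 5
    - x 6 * y 6 - x 7 * y 7 - x 8 * y 8 - x 9 * y 9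

lemma ip_add_left (x y v : L) : ip (x + y) v = ip x v + ip y v := by
  simp only [ip, Pi.add_apply]; ring

lemma ip_smul_left (c : ℤ) (x v : L) : ip (c • x) v = c * ip x v := by
  simp only [ip, Pi.smul_apply, smul_eq_mul]; ring

/-- The reflection `x ↦ x + ⟨x,v⟩ v` associated to a vector `v` with `⟨v,v⟩ = -2`. -/
def reflV (v : L) : L →ₗ[ℤ] L where
  toFun x := x + ip x v • v
  map_add' x y := by
    show x + y + ip (x + y) v • v = (x + ip x v • v) + (y + ip y v • v)
    rw [ip_add_left, add_smul]; abel
  map_smul' c x := by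
    show c • x + ip (c • x) v • v = c • (x + ip x v • v)
    rw [ip_smul_left, mul_smul, smul_add]

-- simple roots
def al0 : L := E5 - E6
def al1 : L := E1 - E2
def al2 : L := H1 - E1 - E5
def al3 : L := H0 - E3 - E7
def al4 : L := E3 - E4
def al5 : L := E7 - E8

/-- The root lattice `Q = ℤα₀ + ⋯ + ℤα₅`. -/
def Q : Submodule ℤ L := Submodule.span ℤ {al0, al1, al2, al3, al4, al5}

-- the simple reflections w_i
def w0 : L →ₗ[ℤ] L := reflV al0
def w1 : L →ₗ[ℤ] L := reflV al1
def w2 : L →ₗ[ℤ] L := reflV al2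
def w3 : L →ₗ[ℤ] L := reflV al3
def w4 : L →ₗ[ℤ] L := reflV al4
def w5 : L →ₗ[ℤ] L := reflV al5

/-- `σ₁₀`: exchanges `E₁↔E₅`, `E₂↔E₆`. -/
def sig10 : L →ₗ[ℤ] L := LinearMap.funLeft ℤ ℤ ![0, 1, 6, 7, 4, 5, 2, 3, 8, 9]

/-- `σ₅₄₃₂₁₀`: exchanges `H₀↔H₁`, `E₁↔E₃`, `E₂↔E₄`, `E₅↔E₇`, `E₆↔E₈`. -/
def sig543210 : L →ₗ[ℤ] L := LinearMap.funLeft ℤ ℤ ![1, 0, 4, 5, 2, 3, 8, 9, 6, 7]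

/-- `σ₅₄ = σ₅₄₃₂₁₀ ∘ σ₁₀ ∘ σ₅₄₃₂₁₀`: exchanges `E₃↔E₇`, `E₄↔E₈`. -/
def sig54 : L →ₗ[ℤ] L := sig543210 ∘ₗ sig10 ∘ₗ sig543210

-- components of the anticanonical divisor
def D0 : L := H0 - E1 - E2
def D1 : L := H1 - E3 - E4
def D2 : L := H0 - E5 - E6
def D3 : L := H1 - E7 - E8

/-- The anticanonical class `δ = -K_X = 2H₀+2H₁-E₁-⋯-E₈`. -/
def delta : L := 2 • H0 + 2 • H1 - E1 - E2 - E3 - E4 - E5 - E6 - E7 - E8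

/-- `K' = α₀+α₁+2α₂+2α₃+α₄+α₅`, the canonical central element. -/
def Kp : L := al0 + al1 + 2 • al2 + 2 • al3 + al4 + al5

-- β and γ roots
def b0 : L := al3 + al5
def b1 : L := al1 + al2
def b2 : L := al3 + al4
def b3 : L := al0 + al2
def g0 : L := al0 + al1 + al2 + al3
def g1 : L := al2 + al3 + al4 + al5

/-- The sublattice `Q_B ⊆ Q` of elements `∑ aᵢαᵢ` with `a₀+a₁-a₂-a₃+a₄+a₅ = 0`. -/
def QB : Set L :=
  {x | ∃ a₀ a₁ a₂ a₃ a₄ a₅ : ℤ,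
    x = a₀ • al0 + a₁ • al1 + a₂ • al2 + a₃ • al3 + a₄ • al4 + a₅ • al5 ∧
    a₀ + a₁ - a₂ - a₃ + a₄ + a₅ = 0}

set_option maxHeartbeats 1000000 in
def Mmat : Matrix (Fin 10) (Fin 10) ℤ :=
  !![2,1,1,0,1,0,1,0,1,0;
     1,2,1,0,1,0,1,0,1,0;
     0,0,0,0,0,0,0,1,0,0;
     -1,-1,-1,0,-1,0,0,0,-1,0;
     0,0,0,0,0,0,0,0,0,1;
     -1,-1,-1,0,-1,0,-1,0,0,0;
     0,0,0,1,0,0,0,0,0,0;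
     -1,-1,0,0,-1,0,-1,0,-1,0;
     0,0,0,0,0,1,0,0,0,0;
     -1,-1,-1,0,0,0,-1,0,-1,0]

set_option maxHeartbeats 1000000 in
def Nmat : Matrix (Fin 10) (Fin 10) ℤ :=
  !![2,1,0,1,0,1,0,1,0,1;
     1,2,0,1,0,1,0,1,0,1;
     -1,-1,0,-1,0,-1,0,0,0,-1;
     0,0,0,0,0,0,1,0,0,0;
     -1,-1,0,-1,0,-1,0,-1,0,0;
     0,0,0,0,0,0,0,0,1,0;
     -1,-1,0,0,0,-1,0,-1,0,-1;
     0,0,1,0,0,0,0,0,0,0;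
     -1,-1,0,-1,0,0,0,-1,0,-1;
     0,0,0,0,1,0,0,0,0,0]

set_option maxHeartbeats 1000000 in
lemma MN : Mmat * Nmat = 1 := by decide

set_option maxHeartbeats 1000000 in
lemma NM : Nmat * Mmat = 1 := by decide

def Fmap : L →ₗ[ℤ] L := Mmat.mulVecLin
def Gmap : L →ₗ[ℤ] L := Nmat.mulVecLin

lemma FG (x : L) : Fmap (Gmap x) = x := by
  show (Fmap ∘ₗ Gmap) x = x
  rw [Fmap, Gmap, ← Matrix.mulVecLin_mul, MN, Matrix.mulVecLin_one]; rfl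

lemma GF (x : L) : Gmap (Fmap x) = x := by
  show (Gmap ∘ₗ Fmap) x = x
  rw [Fmap, Gmap, ← Matrix.mulVecLin_mul, NM, Matrix.mulVecLin_one]; rfl

lemma ip_add_right (v x y : L) : ip v (x + y) = ip v x + ip v y := by
  simp only [ip, Pi.add_apply]; ring

lemma ip_smul_right (c : ℤ) (x v : L) : ip v (c • x) = c * ip v x := by
  simp only [ip, Pi.smul_apply, smul_eq_mul]; ring

/-- the intersection form as a bilinear map -/
def ipL : L →ₗ[ℤ] L →ₗ[ℤ] ℤ :=
  LinearMap.mk₂ ℤ ip ip_add_left (fun c x v => by rw [ip_smul_left]; rfl)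
    ip_add_right (fun c v x => by rw [ip_smul_right]; rfl)

set_option maxHeartbeats 2000000 in
lemma key : ∀ i j : Fin 10,
    ip (Fmap (Pi.single i 1)) (Fmap (Pi.single j 1))
      = ip (Pi.single i 1) (Pi.single j 1) := by decide

lemma ipF (x y : L) : ip (Fmap x) (Fmap y) = ip x y := by
  have h : ipL.compl₁₂ Fmap Fmap = ipL := by
    apply (Pi.basisFun ℤ (Fin 10)).ext
    intro i
    apply (Pi.basisFun ℤ (Fin 10)).ext
    intro j
    simp only [Pi.basisFun_apply, LinearMap.compl₁₂_apply]
    exact key i j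
  exact LinearMap.congr_fun (LinearMap.congr_fun h x) y

set_option maxHeartbeats 1000000 in
/-- The push-forward `φ` of the KNY translation on the Picard lattice is a
Cremona-type isometry: `φ` is a ℤ-module automorphism of `L` and preserves the
intersection form. -/
theorem stmt_0
    (φ : L →ₗ[ℤ] L)
    (hφH0 : φ H0 = 2 • H0 + H1 - E2 - E4 - E6 - E8)
    (hφH1 : φ H1 = H0 + 2 • H1 - E2 - E4 - E6 - E8)
    (hφE1 : φ E1 = H0 + H1 - E2 - E4 - E8)
    (hφE2 : φ E2 = E5)
    (hφE3 : φ E3 = H0 + H1 - E2 - E4 - E6)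
    (hφE4 : φ E4 = E7)
    (hφE5 : φ E5 = H0 + H1 - E4 - E6 - E8)
    (hφE6 : φ E6 = E1)
    (hφE7 : φ E7 = H0 + H1 - E2 - E6 - E8)
    (hφE8 : φ E8 = E3) :
    Function.Bijective φ ∧ ∀ x y : L, ip (φ x) (φ y) = ip x y := by
  have hφ : φ = Fmap := by
    apply (Pi.basisFun ℤ (Fin 10)).ext
    intro i
    rw [Pi.basisFun_apply]
    fin_cases i
    · show φ H0 = Fmap H0; rw [hφH0]; decide
    · show φ H1 = Fmap H1; rw [hφH1]; decide
    · show φ E1 = Fmap E1; rw [hφE1]; decide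
    · show φ E2 = Fmap E2; rw [hφE2]; decide
    · show φ E3 = Fmap E3; rw [hφE3]; decide
    · show φ E4 = Fmap E4; rw [hφE4]; decide
    · show φ E5 = Fmap E5; rw [hφE5]; decide
    · show φ E6 = Fmap E6; rw [hφE6]; decide
    · show φ E7 = Fmap E7; rw [hφE7]; decide
    · show φ E8 = Fmap E8; rw [hφE8]; decide
  subst hφ
  exact ⟨⟨Function.LeftInverse.injective GF, Function.RightInverse.surjective FG⟩, ipF⟩
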